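/- For every n ≥ 1 the identities S'_{n+1} = P_n S_{n+1} + S'_n and S_{n+1} = Q_n S'_n − S_n hold in ℚ[T], where P_n = T^{(3ℓ_n+ℓ_{n−1}+3)/2}(T^{ℓ_{n+1}+1} + 1) and Q_n = T^{(ℓ_n+ℓ_{n−1}+3)/2}. -/
import Mathlib


/-- The sequence `ℓ n` defined by `ℓ 0 = 0`, `ℓ 1 = 1` and
`ℓ (n+1) = 2 ℓ n + ℓ (n-1) + 2` for `n ≥ 1`. -/
def ell : ℕ → ℕ
  | 0 => 0
  | 1 => 1
  | (n+2) => 2 * ell (n+1) + ell n + 2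

/-- `S n = T^((ℓ n + ℓ (n-1) + 3)/2) (T^(ℓ n + 1) - 1) ∈ ℚ[T]`. -/
noncomputable def S (n : ℕ) : Polynomial ℚ :=
  Polynomial.X ^ ((ell n + ell (n-1) + 3) / 2) * (Polynomial.X ^ (ell n + 1) - 1)

/-- `S' n = T^(3 ℓ n + ℓ (n-1) + 4) - 1 ∈ ℚ[T]`. -/
noncomputable def S' (n : ℕ) : Polynomial ℚ :=
  Polynomial.X ^ (3 * ell n + ell (n-1) + 4) - 1

/-- `P n = T^((3 ℓ n + ℓ (n-1) + 3)/2) (T^(ℓ (n+1) + 1) + 1) ∈ ℚ[T]`. -/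
noncomputable def P (n : ℕ) : Polynomial ℚ :=
  Polynomial.X ^ ((3 * ell n + ell (n-1) + 3) / 2) * (Polynomial.X ^ (ell (n+1) + 1) + 1)

/-- `Q n = T^((ℓ n + ℓ (n-1) + 3)/2) ∈ ℚ[T]`. -/
noncomputable def Q (n : ℕ) : Polynomial ℚ :=
  Polynomial.X ^ ((ell n + ell (n-1) + 3) / 2)

/-- `ell (n+1) + ell n` is always odd. -/
lemma ell_add_odd (m : ℕ) : ∃ j, ell (m+1) + ell m = 2*j + 1 := by
  induction m with
  | zero => exact ⟨0, rfl⟩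
  | succ k ih =>
    obtain ⟨j, hj⟩ := ih
    have h : ell (k+1+1) = 2 * ell (k+1) + ell k + 2 := rfl
    exact ⟨ell (k+1) + j + 1, by omega⟩

/-- For every `n ≥ 1`, `S' (n+1) = P n · S (n+1) + S' n` and
`S (n+1) = Q n · S' n - S n` in `ℚ[T]`. -/
theorem S_recurrences (n : ℕ) (hn : 1 ≤ n) :
    S' (n+1) = P n * S (n+1) + S' n ∧ S (n+1) = Q n * S' n - S n := by
  obtain ⟨m, rfl⟩ : ∃ m, n = m + 1 := ⟨n - 1, by omega⟩
  obtain ⟨j, hj⟩ := ell_add_odd m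
  have hL : ell (m+1+1) = 2 * ell (m+1) + ell m + 2 := rfl
  unfold S S' P Q
  simp only [Nat.add_sub_cancel, hL]
  set A := ell (m+1) with hA
  set B := ell m with hB
  have e1 : (3*A+B+3)/2 = A+j+2 := by omega
  have e2 : (2*A+B+2+A+3)/2 = A+j+3 := by omega
  have e3 : (A+B+3)/2 = j+2 := by omega
  have e4 : 3*(2*A+B+2)+A+4 = 4*A+6*j+13 := by omega
  have e5 : 2*A+B+2+1 = A+2*j+4 := by omega
  have e6 : 3*A+B+4 = 2*A+2*j+5 := by omega
  rw [e1, e2, e3, e4, e5, e6]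
  refine ⟨?_, ?_⟩ <;> ring
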